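/- Let H be a Hilbert space, ε > 0, and let C_YX, Ĉ_YX be bounded operators on H and C_XX, Ĉ_XX bounded self-adjoint positive semidefinite operators on H. Then ‖Ĉ_YX(Ĉ_XX + εI)^{-1} − C_YX(C_XX + εI)^{-1}‖ ≤ (1/ε)‖Ĉ_YX − C_YX‖ + (‖C_YX‖/ε²)‖Ĉ_XX − C_XX‖. -/

import Mathlib

open scoped RealInnerProductSpace

lemma aux_res_norm
    {H : Type*} [NormedAddCommGroup H] [InnerProductSpace ℝ H] [CompleteSpace H]
    (C R : H →L[ℝ] H) (hpos : ∀ f : H, 0 ≤ ⟪C f, f⟫)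
    {ε : ℝ} (hε : 0 < ε)
    (hR₂ : (C + ε • (1 : H →L[ℝ] H)) ∘L R = 1) :
    ‖R‖ ≤ 1 / ε := by
  apply ContinuousLinearMap.opNorm_le_bound _ (by positivity)
  intro x
  set y := R x with hy
  have hx : C y + ε • y = x := by
    have := congrArg (fun T : H →L[ℝ] H => T x) hR₂
    simpa [ContinuousLinearMap.comp_apply] using this
  have h1 : ε * ‖y‖ ^ 2 ≤ ‖x‖ * ‖y‖ := by
    have h2 : ε * ‖y‖ ^ 2 ≤ ⟪C y, y⟫ + ε * ⟪y, y⟫ := by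
      have := hpos y
      have : ⟪y, y⟫ = ‖y‖ ^ 2 := real_inner_self_eq_norm_sq y
      nlinarith [hpos y]
    have h3 : ⟪C y, y⟫ + ε * ⟪y, y⟫ = ⟪x, y⟫ := by
      rw [← hx]
      simp [inner_add_left, real_inner_smul_left]
    have h4 : ⟪x, y⟫ ≤ ‖x‖ * ‖y‖ := real_inner_le_norm x y
    linarith
  rcases eq_or_lt_of_le (norm_nonneg y) with h0 | h0
  · rw [← h0]; positivity
  · rw [div_mul_eq_mul_div, le_div_iff₀ hε]
    nlinarith

theorem stmt_6
    {H : Type*} [NormedAddCommGroup H] [InnerProductSpace ℝ H] [CompleteSpace H]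
    (CYX CYXhat CXX CXXhat : H →L[ℝ] H)
    (hCXX : IsSelfAdjoint CXX) (hCXXhat : IsSelfAdjoint CXXhat)
    (hposC : ∀ f : H, 0 ≤ ⟪CXX f, f⟫) (hposChat : ∀ f : H, 0 ≤ ⟪CXXhat f, f⟫)
    (ε : ℝ) (hε : 0 < ε)
    (R Rhat : H →L[ℝ] H)
    (hR₁ : R ∘L (CXX + ε • (1 : H →L[ℝ] H)) = 1)
    (hR₂ : (CXX + ε • (1 : H →L[ℝ] H)) ∘L R = 1)
    (hRhat₁ : Rhat ∘L (CXXhat + ε • (1 : H →L[ℝ] H)) = 1)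
    (hRhat₂ : (CXXhat + ε • (1 : H →L[ℝ] H)) ∘L Rhat = 1) :
    ‖CYXhat ∘L Rhat - CYX ∘L R‖ ≤
      (1 / ε) * ‖CYXhat - CYX‖ + (‖CYX‖ / ε ^ 2) * ‖CXXhat - CXX‖ := by
  have hRn : ‖R‖ ≤ 1 / ε := aux_res_norm CXX R hposC hε hR₂
  have hRhn : ‖Rhat‖ ≤ 1 / ε := aux_res_norm CXXhat Rhat hposChat hε hRhat₂
  have hres : Rhat - R = Rhat ∘L (CXX - CXXhat) ∘L R := by
    have : Rhat ∘L (CXX - CXXhat) ∘L R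
        = Rhat ∘L ((CXX + ε • (1 : H →L[ℝ] H)) - (CXXhat + ε • (1 : H →L[ℝ] H))) ∘L R := by
      congr 1
      ext x
      simp
    rw [this]
    have : Rhat ∘L ((CXX + ε • (1 : H →L[ℝ] H)) - (CXXhat + ε • (1 : H →L[ℝ] H))) ∘L R
        = Rhat ∘L ((CXX + ε • (1 : H →L[ℝ] H)) ∘L R)
          - (Rhat ∘L (CXXhat + ε • (1 : H →L[ℝ] H))) ∘L R := by
      ext x; simp [ContinuousLinearMap.comp_apply]
    rw [this, hR₂, hRhat₁]
    ext x; simp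
  have hsplit : CYXhat ∘L Rhat - CYX ∘L R
      = (CYXhat - CYX) ∘L Rhat + CYX ∘L (Rhat - R) := by
    ext x; simp [ContinuousLinearMap.comp_apply]
  rw [hsplit]
  have h1 : ‖(CYXhat - CYX) ∘L Rhat‖ ≤ ‖CYXhat - CYX‖ * (1 / ε) := by
    calc ‖(CYXhat - CYX) ∘L Rhat‖ ≤ ‖CYXhat - CYX‖ * ‖Rhat‖ :=
          ContinuousLinearMap.opNorm_comp_le _ _
      _ ≤ ‖CYXhat - CYX‖ * (1 / ε) := by
          exact mul_le_mul_of_nonneg_left hRhn (norm_nonneg _)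
  have h2 : ‖CYX ∘L (Rhat - R)‖ ≤ ‖CYX‖ * ((1 / ε) * (‖CXXhat - CXX‖ * (1 / ε))) := by
    have hmid : ‖Rhat - R‖ ≤ (1 / ε) * (‖CXXhat - CXX‖ * (1 / ε)) := by
      rw [hres]
      calc ‖Rhat ∘L (CXX - CXXhat) ∘L R‖
          ≤ ‖Rhat‖ * ‖(CXX - CXXhat) ∘L R‖ := ContinuousLinearMap.opNorm_comp_le _ _
        _ ≤ ‖Rhat‖ * (‖CXX - CXXhat‖ * ‖R‖) := by
            exact mul_le_mul_of_nonneg_left (ContinuousLinearMap.opNorm_comp_le _ _)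
              (norm_nonneg _)
        _ ≤ (1 / ε) * (‖CXXhat - CXX‖ * (1 / ε)) := by
            rw [show ‖CXX - CXXhat‖ = ‖CXXhat - CXX‖ from norm_sub_rev _ _]
            have hε' : (0:ℝ) ≤ 1/ε := by positivity
            gcongr
    calc ‖CYX ∘L (Rhat - R)‖ ≤ ‖CYX‖ * ‖Rhat - R‖ := ContinuousLinearMap.opNorm_comp_le _ _
      _ ≤ ‖CYX‖ * ((1 / ε) * (‖CXXhat - CXX‖ * (1 / ε))) :=
          mul_le_mul_of_nonneg_left hmid (norm_nonneg _)
  calc ‖(CYXhat - CYX) ∘L Rhat + CYX ∘L (Rhat - R)‖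
      ≤ ‖(CYXhat - CYX) ∘L Rhat‖ + ‖CYX ∘L (Rhat - R)‖ := norm_add_le _ _
    _ ≤ ‖CYXhat - CYX‖ * (1 / ε) + ‖CYX‖ * ((1 / ε) * (‖CXXhat - CXX‖ * (1 / ε))) := by
        linarith
    _ = (1 / ε) * ‖CYXhat - CYX‖ + (‖CYX‖ / ε ^ 2) * ‖CXXhat - CXX‖ := by
        field_simp
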